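/- Let n ≥ 1 and α_i, β_i, γ_i, δ_i, t_j ∈ ℂ with all α_i ≠ 0 and conventions α₀ = 1, β₁ = 0, where t_j = δ_j + β_j/α_{j-1}. Define the row vectors g_j = (t_j, t_j·β_{j+1}/α_j + γ_{j+1}) ∈ ℂ^{1×2} for j = 1, …, n−1, the 2×2 matrices b_i = [[0, 0], [1, β_{i+1}/α_i]] for i = 2, …, n−1, and the column vector h = (1, 0)ᵀ. Then for all indices with 1 ≤ j and j+1 < k ≤ n: g_j·b_{j+1}·b_{j+2}⋯b_{k-1}·h = (α_{k-1}/α_{j+1})·(((δ_j/α_j) + β_j/(α_{j-1}·α_j))·β_{j+1} + γ_{j+1})·∏_{i=j+1}^{k-2} (β_{i+1}/α_{i+1}). Consequently, the unit upper triangular n×n matrix with superdiagonal entries t_j and (j,k) entries equal to the right-hand side for k > j+1 is upper triangular 2-quasiseparable with these generators. -/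

import Mathlib

open Matrix Finset

/-- Ordered product `b a * b (a+1) * ⋯ * b (k-1)` of `2 × 2` matrices. -/
noncomputable def genProd (b : ℕ → Matrix (Fin 2) (Fin 2) ℂ) (a k : ℕ) :
    Matrix (Fin 2) (Fin 2) ℂ :=
  ((List.range (k - a)).map (fun m => b (a + m))).prod


lemma genProd_self (b : ℕ → Matrix (Fin 2) (Fin 2) ℂ) (a : ℕ) :
    genProd b a a = 1 := by simp [genProd]

lemma genProd_cons (b : ℕ → Matrix (Fin 2) (Fin 2) ℂ) (a k : ℕ) (h : a < k) :
    genProd b a k = b a * genProd b (a + 1) k := by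
  unfold genProd
  have hk : k - a = (k - (a + 1)) + 1 := by omega
  rw [hk, List.range_succ_eq_map]
  simp only [List.map_cons, List.prod_cons, List.map_map, Nat.add_zero]
  have hf : ((fun m => b (a + m)) ∘ Nat.succ) = fun m => b (a + 1 + m) := by
    funext m
    simp only [Function.comp_apply]
    rw [show a + m.succ = a + 1 + m from by omega]
  rw [hf]

lemma genProd_mulVec (β α : ℕ → ℂ) (b : ℕ → Matrix (Fin 2) (Fin 2) ℂ)
    (hb : ∀ i, b i = !![0, 0; 1, β (i + 1) / α i]) :
    ∀ d a : ℕ, (genProd b a (a + d + 1)).mulVec ![1, 0]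
      = ![0, ∏ m ∈ Finset.Ico a (a + d), (β (m + 1) / α m)] := by
  intro d
  induction d with
  | zero =>
    intro a
    rw [genProd_cons _ _ _ (by omega), genProd_self]
    ext i
    fin_cases i <;> simp [hb, Matrix.mulVec, dotProduct, Fin.sum_univ_two]
  | succ d ih =>
    intro a
    rw [genProd_cons _ _ _ (by omega), ← Matrix.mulVec_mulVec]
    have : a + (d + 1) + 1 = (a + 1) + d + 1 := by omega
    rw [this, ih (a + 1)]
    rw [Finset.prod_eq_prod_Ico_succ_bot (by omega : a < a + (d + 1))]
    have : a + (d + 1) = a + 1 + d := by omega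
    rw [this]
    ext i
    fin_cases i <;> simp [hb, Matrix.mulVec, dotProduct, Fin.sum_univ_two]

/-- the well-free generators
`g_j = (t_j, t_j β_{j+1}/α_j + γ_{j+1})`, `b_i = [[0,0],[1, β_{i+1}/α_i]]`,
`h = (1,0)ᵀ`, with `t_j = δ_j + β_j/α_{j-1}`, all `α_i ≠ 0`, `α 0 = 1`,
`β 1 = 0`, satisfy
`g_j b_{j+1} ⋯ b_{k-1} h
  = (α_{k-1}/α_{j+1}) ((δ_j/α_j + β_j/(α_{j-1} α_j)) β_{j+1} + γ_{j+1})
      ∏_{i=j+1}^{k-2} (β_{i+1}/α_{i+1})`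
for `1 ≤ j`, `j+1 < k ≤ n`; consequently the corresponding unit upper
triangular matrix `M` is 2-quasiseparable with these generators. -/
theorem wellfree_generators_M (n : ℕ) (hn : 1 ≤ n) (t α β γ δ : ℕ → ℂ)
    (hα : ∀ i, α i ≠ 0) (hα0 : α 0 = 1) (hβ1 : β 1 = 0)
    (ht : ∀ j, t j = δ j + β j / α (j - 1))
    (g : ℕ → Fin 2 → ℂ)
    (hg : ∀ j, g j = ![t j, t j * β (j + 1) / α j + γ (j + 1)])
    (b : ℕ → Matrix (Fin 2) (Fin 2) ℂ)
    (hb : ∀ i, b i = !![0, 0; 1, β (i + 1) / α i])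
    (hvec : Fin 2 → ℂ) (hh : hvec = ![1, 0])
    (M : Matrix (Fin n) (Fin n) ℂ)
    (hM : ∀ i j : Fin n, M i j =
      if (j : ℕ) < (i : ℕ) then 0
      else if (j : ℕ) = (i : ℕ) then 1
      else if (j : ℕ) = (i : ℕ) + 1 then t ((i : ℕ) + 1)
      else (α (j : ℕ) / α ((i : ℕ) + 2)) *
        ((δ ((i : ℕ) + 1) / α ((i : ℕ) + 1)
            + β ((i : ℕ) + 1) / (α (i : ℕ) * α ((i : ℕ) + 1))) * β ((i : ℕ) + 2)
          + γ ((i : ℕ) + 2)) *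
        ∏ m ∈ Finset.Ico ((i : ℕ) + 2) (j : ℕ), (β (m + 1) / α (m + 1))) :
    (∀ j k : ℕ, 1 ≤ j → j + 1 < k → k ≤ n →
      g j ⬝ᵥ (genProd b (j + 1) k).mulVec hvec
        = (α (k - 1) / α (j + 1)) *
            ((δ j / α j + β j / (α (j - 1) * α j)) * β (j + 1) + γ (j + 1)) *
            ∏ i ∈ Finset.Ico (j + 1) (k - 1), (β (i + 1) / α (i + 1))) ∧
    (∀ i j : Fin n, (i : ℕ) + 1 < (j : ℕ) →
      M i j = g ((i : ℕ) + 1) ⬝ᵥ (genProd b ((i : ℕ) + 2) ((j : ℕ) + 1)).mulVec hvec) ∧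
    (∀ i j : Fin n, (j : ℕ) = (i : ℕ) + 1 →
      M i j = g ((i : ℕ) + 1) ⬝ᵥ hvec) := by
  have key : ∀ j k : ℕ, 1 ≤ j → j + 1 < k →
      g j ⬝ᵥ (genProd b (j + 1) k).mulVec hvec
        = (α (k - 1) / α (j + 1)) *
            ((δ j / α j + β j / (α (j - 1) * α j)) * β (j + 1) + γ (j + 1)) *
            ∏ i ∈ Finset.Ico (j + 1) (k - 1), (β (i + 1) / α (i + 1)) := by
    intro j k hj hk
    have hgp : (genProd b (j + 1) k).mulVec ![1, 0]
        = ![0, ∏ m ∈ Finset.Ico (j + 1) (k - 1), (β (m + 1) / α m)] := by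
      have h0 := genProd_mulVec β α b hb (k - j - 2) (j + 1)
      rw [show (j + 1) + (k - j - 2) + 1 = k from by omega,
        show (j + 1) + (k - j - 2) = k - 1 from by omega] at h0
      exact h0
    rw [hh, hgp]
    -- LHS = g j ⬝ᵥ ![0, X]
    rw [hg]
    simp only [dotProduct, Fin.sum_univ_two, Matrix.cons_val_zero, Matrix.cons_val_one,
      Matrix.head_cons]
    rw [mul_zero, zero_add]
    -- coefficient identity
    have hC : t j * β (j + 1) / α j + γ (j + 1)
        = (δ j / α j + β j / (α (j - 1) * α j)) * β (j + 1) + γ (j + 1) := by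
      rw [ht]
      field_simp
    rw [hC]
    -- product identity
    have hA : (∏ m ∈ Finset.Ico (j + 1) (k - 1), α m) ≠ 0 :=
      Finset.prod_ne_zero_iff.2 fun m _ => hα m
    have hB : (∏ m ∈ Finset.Ico (j + 1) (k - 1), α (m + 1)) ≠ 0 :=
      Finset.prod_ne_zero_iff.2 fun m _ => hα (m + 1)
    have hprod : (∏ m ∈ Finset.Ico (j + 1) (k - 1), (β (m + 1) / α m))
        = (α (k - 1) / α (j + 1)) * ∏ m ∈ Finset.Ico (j + 1) (k - 1), (β (m + 1) / α (m + 1)) := by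
      rw [Finset.prod_div_distrib, Finset.prod_div_distrib]
      have hAB : (∏ m ∈ Finset.Ico (j + 1) (k - 1), α m) * α (k - 1)
          = α (j + 1) * ∏ m ∈ Finset.Ico (j + 1) (k - 1), α (m + 1) := by
        have h1 : (∏ m ∈ Finset.Ico (j + 1) (k - 1), α m) * α (k - 1)
            = ∏ m ∈ Finset.Ico (j + 1) k, α m := by
          have h1' := Finset.prod_Ico_succ_top (show j + 1 ≤ k - 1 by omega) α
          rw [show k - 1 + 1 = k from by omega] at h1'
          rw [h1']
        have h2 : ∏ m ∈ Finset.Ico (j + 1) (k - 1), α (m + 1)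
            = ∏ m ∈ Finset.Ico (j + 2) k, α m := by
          rw [Finset.prod_Ico_eq_prod_range, Finset.prod_Ico_eq_prod_range]
          have : k - 1 - (j + 1) = k - (j + 2) := by omega
          rw [this]
          apply Finset.prod_congr rfl
          intro m _
          congr 1
          omega
        rw [h1, h2, Finset.prod_eq_prod_Ico_succ_bot (by omega : j + 1 < k)]
      rw [div_mul_div_comm, div_eq_div_iff hA (mul_ne_zero (hα (j + 1)) hB)]
      linear_combination (-(∏ m ∈ Finset.Ico (j + 1) (k - 1), β (m + 1))) * hAB
    rw [hprod]
    ring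
  refine ⟨fun j k hj hk _ => key j k hj hk, ?_, ?_⟩
  · intro i j hij
    rw [hM]
    rw [if_neg (by omega), if_neg (by omega), if_neg (by omega)]
    rw [key ((i : ℕ) + 1) ((j : ℕ) + 1) (by omega) (by omega)]
    simp
  · intro i j hij
    rw [hM, if_neg (by omega), if_neg (by omega), if_pos hij]
    rw [hg, hh]
    simp [dotProduct, Fin.sum_univ_two]
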